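/- Under Assumption (⋆) (the setting of the previous statement), the torsion of the acyclic complex (H_*(S^{2k+1} × V; F), d₁), computed with respect to a basis coming from a ℤ-basis of the free homology of V via Künneth, equals r^{−χ(V)} in F^×/±1, where χ(V) = ∑_r (−1)^r dim V_r. -/

import Mathlib

/-- Under Assumption (⋆) for `L = S^{2k+1} × V` (Künneth bases `w j, u (j-(2k+1))` of
`H j`, square-zero degree-(2k+1) derivation `d₁` with `d₁ σ = r·1`, `r ≠ 0`), the torsion
of the acyclic complex `(H_*(L;F), d₁)`, computed with respect to the Künneth bases,
equals `r^{-χ(V)}` in `F^×/±1`, where `χ(V) = ∑ⱼ (-1)ʲ dim Vⱼ`. -/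
theorem stmt_17 (F A : Type*) [Field F] [Ring A] [Algebra F A]
    (k n : ℕ)
    (ι : ℤ → Type*) [∀ j, Fintype (ι j)] [∀ j, DecidableEq (ι j)]
    (hιneg : ∀ j : ℤ, j < 0 → IsEmpty (ι j))
    (hιtop : ∀ j : ℤ, (n : ℤ) - (2 * (k : ℤ) + 1) < j → IsEmpty (ι j))
    (H : ℤ → Submodule F A)
    (u w : ∀ j : ℤ, ι j → A)
    (hu : ∀ j i, u j i ∈ H (j + (2 * (k : ℤ) + 1)))
    (hw : ∀ j i, w j i ∈ H j)
    (σ : A) (hσσ : σ * σ = 0)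
    (hσu : ∀ j i, σ * u j i = w j i)
    (hσw : ∀ j i, σ * w j i = 0)
    (hσdeg : ∀ j : ℤ, ∀ x ∈ H j, σ * x ∈ H (j - (2 * (k : ℤ) + 1)))
    (d : A →ₗ[F] A) (hd2 : d ∘ₗ d = 0)
    (hdeg : ∀ j : ℤ, ∀ x ∈ H j, d x ∈ H (j + (2 * (k : ℤ) + 1)))
    (r : F) (hr : r ≠ 0)
    (hdσ : d σ = r • (1 : A))
    (hLeibσ : ∀ x : A, d (σ * x) = d σ * x - σ * d x)
    (hb : ∀ j : ℤ, Module.Basis (ι j ⊕ ι (j - (2 * (k : ℤ) + 1))) F ↥(H j))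
    (hhb : ∀ (j : ℤ) p, ((hb j p : A)) = Sum.elim (w j) (u (j - (2 * (k : ℤ) + 1))) p)
    (Q : ∀ j : ℤ, (ι j ⊕ ι (j - (2 * (k : ℤ) + 1))) → ↥(H j))
    (hQ : ∀ (j : ℤ) p, ((Q j p : A)) =
      Sum.elim (fun i : ι j => r⁻¹ • (σ * (r⁻¹ • d (w j i))))
        (fun i : ι (j - (2 * (k : ℤ) + 1)) => r⁻¹ • d (w (j - (2 * (k : ℤ) + 1)) i)) p) :
    (∏ jj ∈ Finset.range (n + 1), ((hb (jj : ℤ)).toMatrix (Q (jj : ℤ))).det ^ ((-1 : ℤ) ^ jj))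
      = r ^ (-(∑ jj ∈ Finset.range (n + 1),
          (-1 : ℤ) ^ jj * (Fintype.card (ι (jj : ℤ)) : ℤ))) ∨
    (∏ jj ∈ Finset.range (n + 1), ((hb (jj : ℤ)).toMatrix (Q (jj : ℤ))).det ^ ((-1 : ℤ) ^ jj))
      = -(r ^ (-(∑ jj ∈ Finset.range (n + 1),
          (-1 : ℤ) ^ jj * (Fintype.card (ι (jj : ℤ)) : ℤ)))) := by
  have memH : ∀ (a b : ℤ), a = b → ∀ x : A, x ∈ H a → x ∈ H b := by
    rintro a b rfl x h; exact h
  have castW : ∀ (a b : ℤ), a = b → ∀ x : A,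
      (∃ c : ι a → F, x = ∑ i, c i • w a i) → ∃ c : ι b → F, x = ∑ i, c i • w b i := by
    rintro a b rfl x h; exact h
  -- Leibniz consequences
  have hdw : ∀ (j : ℤ) (i : ι j), d (w j i) = r • u j i - σ * d (u j i) := by
    intro j i
    have h1 := hLeibσ (u j i)
    rw [hσu, hdσ, smul_mul_assoc, one_mul] at h1
    exact h1
  have hσdw : ∀ (j : ℤ) (i : ι j), σ * d (w j i) = r • w j i := by
    intro j i
    rw [hdw, mul_sub, mul_smul_comm, hσu, ← mul_assoc, hσσ, zero_mul, sub_zero]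
  -- column `inl`
  have hQinl : ∀ (j : ℤ) (q : ι j), Q j (Sum.inl q) = r⁻¹ • hb j (Sum.inl q) := by
    intro j q
    apply Subtype.ext
    have h2 : ((r⁻¹ • hb j (Sum.inl q) : H j) : A) = r⁻¹ • (hb j (Sum.inl q) : A) := rfl
    rw [h2, hQ, hhb]
    simp only [Sum.elim_inl]
    rw [mul_smul_comm, hσdw, smul_smul, smul_smul, mul_assoc, inv_mul_cancel₀ hr, mul_one]
  -- key span lemma
  have key : ∀ (j' : ℤ) (y : A), y ∈ H j' →
      ∃ c : ι (j' - (2 * (k : ℤ) + 1)) → F,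
        σ * y = ∑ i, c i • w (j' - (2 * (k : ℤ) + 1)) i := by
    intro j' y hy
    have hrep := (hb j').sum_repr ⟨y, hy⟩
    obtain ⟨cc, hcc⟩ : ∃ cc : (ι j' ⊕ ι (j' - (2 * (k : ℤ) + 1))) → F,
        y = ∑ p, cc p • ((hb j' p : A)) := by
      refine ⟨fun p => (hb j').repr ⟨y, hy⟩ p, ?_⟩
      have h3 := congrArg (Subtype.val) hrep
      simp only [Submodule.coe_sum, Submodule.coe_smul] at h3
      exact h3.symm
    refine ⟨fun i => cc (Sum.inr i), ?_⟩
    rw [hcc, Finset.mul_sum]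
    rw [Fintype.sum_sum_type]
    simp only [hhb, Sum.elim_inl, Sum.elim_inr, mul_smul_comm, hσw, hσu, smul_zero,
      Finset.sum_const_zero, zero_add]
  have keyj : ∀ (j : ℤ) (y : A), y ∈ H (j + (2 * (k : ℤ) + 1)) →
      ∃ c : ι j → F, σ * y = ∑ i, c i • w j i := by
    intro j y hy
    exact castW (j + (2 * (k : ℤ) + 1) - (2 * (k : ℤ) + 1)) j (by ring) _
      (key (j + (2 * (k : ℤ) + 1)) y hy)
  -- column `inr`
  have hQinr : ∀ (j : ℤ) (q : ι (j - (2 * (k : ℤ) + 1))),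
      ∃ c : ι j → F, Q j (Sum.inr q) = hb j (Sum.inr q) + ∑ i, c i • hb j (Sum.inl i) := by
    intro j q
    have hmem : d (u (j - (2 * (k : ℤ) + 1)) q) ∈ H (j + (2 * (k : ℤ) + 1)) := by
      refine memH ((j - (2 * (k : ℤ) + 1)) + (2 * (k : ℤ) + 1) + (2 * (k : ℤ) + 1))
        (j + (2 * (k : ℤ) + 1)) (by ring) _ ?_
      exact hdeg _ _ (hu (j - (2 * (k : ℤ) + 1)) q)
    obtain ⟨c, hc⟩ := keyj j _ hmem
    refine ⟨fun i => -(r⁻¹ * c i), ?_⟩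
    apply Subtype.ext
    have hco : ((hb j (Sum.inr q) + ∑ i, (fun i => -(r⁻¹ * c i)) i • hb j (Sum.inl i) : H j) : A)
        = (hb j (Sum.inr q) : A) + ∑ i, -(r⁻¹ * c i) • (hb j (Sum.inl i) : A) := by
      push_cast
      rfl
    rw [hco, hQ]
    simp only [Sum.elim_inr, hhb, Sum.elim_inl]
    rw [hdw, smul_sub, smul_smul, inv_mul_cancel₀ hr, one_smul, hc, Finset.smul_sum]
    rw [sub_eq_add_neg, ← Finset.sum_neg_distrib]
    congr 1
    refine Finset.sum_congr rfl fun i _ => ?_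
    rw [smul_smul, neg_smul]
  -- determinant in each degree
  have hdet : ∀ j : ℤ, ((hb j).toMatrix (Q j)).det = r⁻¹ ^ Fintype.card (ι j) := by
    intro j
    classical
    set B : Matrix (ι j) (ι (j - (2 * (k : ℤ) + 1))) F :=
      fun p q => (hb j).repr (Q j (Sum.inr q)) (Sum.inl p) with hB
    have hM : (hb j).toMatrix (Q j)
        = Matrix.fromBlocks (r⁻¹ • (1 : Matrix (ι j) (ι j) F)) B 0 1 := by
      ext p q
      cases p with
      | inl p =>
        cases q with
        | inl q =>
          rw [Module.Basis.toMatrix_apply, hQinl, map_smul, Module.Basis.repr_self]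
          by_cases h : p = q <;> simp [Matrix.one_apply, Finsupp.single_apply, h, eq_comm]
        | inr q =>
          rw [Module.Basis.toMatrix_apply]
          rfl
      | inr p =>
        cases q with
        | inl q =>
          rw [Module.Basis.toMatrix_apply, hQinl, map_smul, Module.Basis.repr_self]
          simp [Finsupp.single_apply]
        | inr q =>
          obtain ⟨c, hc⟩ := hQinr j q
          rw [Module.Basis.toMatrix_apply, hc]
          by_cases h : p = q <;>
            simp [Finsupp.single_apply, Matrix.one_apply, h, eq_comm]
    rw [hM, Matrix.det_fromBlocks_zero₂₁, Matrix.det_one, mul_one, Matrix.det_smul,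
      Matrix.det_one, mul_one]
  -- assemble the product
  left
  have hzpow : ∀ jj : ℕ, (r⁻¹ ^ Fintype.card (ι (jj : ℤ)) : F) ^ ((-1 : ℤ) ^ jj)
      = r ^ (-((-1 : ℤ) ^ jj * (Fintype.card (ι (jj : ℤ)) : ℤ))) := by
    intro jj
    rw [inv_pow, ← zpow_natCast r, ← zpow_neg, ← zpow_mul]
    congr 1
    ring
  have hprod : ∀ (s : Finset ℕ) (a : ℕ → ℤ), ∏ j ∈ s, r ^ a j = r ^ (∑ j ∈ s, a j) := by
    intro s a
    induction s using Finset.induction with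
    | empty => simp
    | insert a s h ih => rw [Finset.prod_insert h, Finset.sum_insert h, ih, zpow_add₀ hr]
  calc ∏ jj ∈ Finset.range (n + 1), ((hb (jj : ℤ)).toMatrix (Q (jj : ℤ))).det ^ ((-1 : ℤ) ^ jj)
      = ∏ jj ∈ Finset.range (n + 1),
          r ^ (-((-1 : ℤ) ^ jj * (Fintype.card (ι (jj : ℤ)) : ℤ))) := by
        refine Finset.prod_congr rfl fun jj _ => ?_
        rw [hdet, hzpow]
    _ = r ^ (∑ jj ∈ Finset.range (n + 1),
          -((-1 : ℤ) ^ jj * (Fintype.card (ι (jj : ℤ)) : ℤ))) := hprod _ _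
    _ = _ := by rw [Finset.sum_neg_distrib]
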